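/- For all n ≥ 3, the poset of pointed Lyndon forests FLyn_n^• and Reiner's poset of rooted spanning forests SF_n are not isomorphic as posets. -/

import Mathlib

open Finset

open scoped BigOperators Classical

/-! ## Generic machinery for edge labelings of posets presented by cover relations -/

section Chains

variable {α : Type*} {L : Type*}

/-- The word of labels read along a list of poset elements. -/
def wordOf (lab : α → α → L) : List α → List L
  | x :: y :: rest => lab x y :: wordOf lab (y :: rest)
  | _ => []

/-- `c` is a saturated chain from `x` to `y` with respect to the cover relation `cov`;
in a graded poset these are exactly the maximal chains of the interval `[x, y]`. -/
def IsSatChain (cov : α → α → Prop) (x y : α) (c : List α) : Prop :=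
  c.Chain' cov ∧ c.head? = some x ∧ c.getLast? = some y

/-- A word of labels is increasing if consecutive labels strictly increase. -/
def IncWord (lt : L → L → Prop) (w : List L) : Prop := w.Chain' lt

/-- A word of labels is ascent-free if no consecutive pair of labels strictly increases. -/
def AscFree (lt : L → L → Prop) (w : List L) : Prop := w.Chain' fun a b => ¬ lt a b

/-- The partial order generated by a cover relation. -/
def leOf (cov : α → α → Prop) : α → α → Prop := Relation.ReflTransGen cov

/-- The strict order generated by a cover relation. -/
def ltOf (cov : α → α → Prop) (a b : α) : Prop := leOf cov a b ∧ a ≠ b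

/-- An ER-labeling: every closed interval has a unique increasing maximal chain. -/
def IsERLabeling (cov : α → α → Prop) (lab : α → α → L) (lt : L → L → Prop) : Prop :=
  ∀ x y, leOf cov x y → ∃! c, IsSatChain cov x y c ∧ IncWord lt (wordOf lab c)

/-- The rank two switching property: in every rank-two interval whose increasing chain
has word of labels `ab`, there is a unique chain with word of labels `ba`. -/
def RankTwoSwitch (cov : α → α → Prop) (lab : α → α → L) (lt : L → L → Prop) : Prop :=
  ∀ x y c a b, IsSatChain cov x y c → IncWord lt (wordOf lab c) → wordOf lab c = [a, b] →
    ∃! c', IsSatChain cov x y c' ∧ wordOf lab c' = [b, a]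

/-- In every interval, distinct ascent-free maximal chains have distinct label words. -/
def AscFreeInj (cov : α → α → Prop) (lab : α → α → L) (lt : L → L → Prop) : Prop :=
  ∀ x y c c', IsSatChain cov x y c → IsSatChain cov x y c' →
    AscFree lt (wordOf lab c) → AscFree lt (wordOf lab c') →
    wordOf lab c = wordOf lab c' → c = c'

/-- An EW-labeling. -/
def IsEWLabeling (cov : α → α → Prop) (lab : α → α → L) (lt : L → L → Prop) : Prop :=
  IsERLabeling cov lab lt ∧ RankTwoSwitch cov lab lt ∧ AscFreeInj cov lab lt

/-- An EL-labeling: every closed interval has a unique increasing maximal chain,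
which lexicographically precedes every other maximal chain of the interval. -/
def IsELLabeling (cov : α → α → Prop) (lab : α → α → L) (lt : L → L → Prop) : Prop :=
  ∀ x y, leOf cov x y →
    ∃ c, (IsSatChain cov x y c ∧ IncWord lt (wordOf lab c)) ∧
      ∀ c', IsSatChain cov x y c' → c' ≠ c →
        ¬ IncWord lt (wordOf lab c') ∧ List.Lex lt (wordOf lab c) (wordOf lab c')

end Chains

/-! ## Möbius functions and Whitney numbers -/

section Whitney

variable {α : Type*} {β : Type*}

/-- Auxiliary Möbius function computed with fuel; for an element of rank `k` of a
graded poset, fuel `k` computes the one-variable Möbius function `μ(0̂, ·)`. -/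
noncomputable def muAux (ltr : α → α → Prop) (bot : α) : ℕ → α → ℤ
  | 0, x => if x = bot then 1 else 0
  | k + 1, x => if x = bot then 1 else - ∑ᶠ (y : α) (_ : ltr y x), muAux ltr bot k y

/-- The one-variable Möbius function `μ(0̂, x)` of a graded poset presented by its
cover relation `cov`, minimum `bot` and rank function `rk`. -/
noncomputable def muBot (cov : α → α → Prop) (bot : α) (rk : α → ℕ) (x : α) : ℤ :=
  muAux (ltOf cov) bot (rk x) x

/-- The `k`-th Whitney number of the first kind. -/
noncomputable def whitney1 (cov : α → α → Prop) (bot : α) (rk : α → ℕ) (k : ℕ) : ℤ :=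
  ∑ᶠ (x : α) (_ : rk x = k), muBot cov bot rk x

/-- The `k`-th Whitney number of the second kind. -/
noncomputable def whitney2 (rk : α → ℕ) (k : ℕ) : ℕ :=
  Nat.card {x : α // rk x = k}

/-- Two graded posets are Whitney duals if their Whitney numbers of the first and second
kind are swapped (up to sign). -/
def IsWhitneyDual (covP : α → α → Prop) (botP : α) (rkP : α → ℕ)
    (covQ : β → β → Prop) (botQ : β) (rkQ : β → ℕ) : Prop :=
  ∀ k, (whitney1 covP botP rkP k).natAbs = whitney2 rkQ k ∧
       (whitney1 covQ botQ rkQ k).natAbs = whitney2 rkP k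

/-- Two graded posets are Whitney twins if they have the same Whitney numbers of the first
and of the second kind. -/
def IsWhitneyTwin (covP : α → α → Prop) (botP : α) (rkP : α → ℕ)
    (covQ : β → β → Prop) (botQ : β) (rkQ : β → ℕ) : Prop :=
  ∀ k, whitney1 covP botP rkP k = whitney1 covQ botQ rkQ k ∧ whitney2 rkP k = whitney2 rkQ k

/-- `(cov, bot, rk)` presents a graded poset with minimum `bot`. -/
def IsGradedPoset (cov : α → α → Prop) (bot : α) (rk : α → ℕ) : Prop :=
  (∀ x, leOf cov bot x) ∧ rk bot = 0 ∧ ∀ x y, cov x y → rk y = rk x + 1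

/-- A graded poset has a Whitney dual. -/
def HasWhitneyDual {γ : Type} (cov : γ → γ → Prop) (bot : γ) (rk : γ → ℕ) : Prop :=
  ∃ (β : Type) (_ : Finite β) (covQ : β → β → Prop) (botQ : β) (rkQ : β → ℕ),
    IsGradedPoset covQ botQ rkQ ∧ IsWhitneyDual cov bot rk covQ botQ rkQ

/-- Isomorphism of the posets generated by two cover relations. -/
def CovPosetIso (covP : α → α → Prop) (covQ : β → β → Prop) : Prop :=
  ∃ e : α ≃ β, ∀ x y, leOf covP x y ↔ leOf covQ (e x) (e y)

end Whitney

/-! ## The label posets `Λₙʷ` and `Λₙ•` (strict order relations)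

Labels are triples `(a, b, u)` with `a < b` in `[n]` and `u ∈ {0,1}` (encoded as `Bool`). -/

/-- The strict order of `Λₙʷ = Γ₁ ⊕ ⋯ ⊕ Γ_{n-1}` where `Γ_a` carries the product order
`(a,b)ᵘ ≤ (a,c)ᵛ ↔ b ≤ c ∧ u ≤ v`. -/
def ltLw (x y : ℕ × ℕ × Bool) : Prop :=
  x.1 < y.1 ∨ (x.1 = y.1 ∧ x.2.1 ≤ y.2.1 ∧ x.2.2 ≤ y.2.2 ∧ x.2 ≠ y.2)

/-- The strict order of `Λₙ• = A₁ ⊕ C₁ ⊕ ⋯ ⊕ A_{n-1} ⊕ C_{n-1}` where `A_a` is the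
antichain of the `(a,b)⁰` and `C_a` is the chain of the `(a,b)¹` ordered by `b`. -/
def ltLp (x y : ℕ × ℕ × Bool) : Prop :=
  x.1 < y.1 ∨ (x.1 = y.1 ∧
    ((x.2.2 = false ∧ y.2.2 = true) ∨ (x.2.2 = true ∧ y.2.2 = true ∧ x.2.1 < y.2.1)))

/-! ## Pointed and weighted partition posets -/

/-- The minimum of a finite set of naturals (`0` for the empty set). -/
def minB (B : Finset ℕ) : ℕ := B.min.untopD 0

/-- Pointed partitions of the ground set `A`: partitions of `A` into blocks, each block
carrying a distinguished (pointed) element.  A pointed block is a pair `(B, p)` with `p ∈ B`. -/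
abbrev PPart (A : Finset ℕ) : Type :=
  {π : Finset (Finset ℕ × ℕ) //
    (∀ b ∈ π, b.2 ∈ b.1) ∧
    (∀ b ∈ π, ∀ b' ∈ π, b ≠ b' → Disjoint b.1 b'.1) ∧
    π.biUnion Prod.fst = A}

/-- The cover relation of the pointed partition poset: merge two pointed blocks, the merged
block being pointed at the pointed element of one of the two. -/
def covPP {A : Finset ℕ} (π π' : PPart A) : Prop :=
  ∃ b1 ∈ π.1, ∃ b2 ∈ π.1, minB b1.1 < minB b2.1 ∧
    ∃ p : ℕ, (p = b1.2 ∨ p = b2.2) ∧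
      π'.1 = insert (b1.1 ∪ b2.1, p) ((π.1.erase b1).erase b2)

/-- The labeling `λ•` (as a bare label map): the cover `u`-merging blocks `A, B` with
`min A < min B` gets the label `(min A, min B, u)`, where `u = 1` exactly when the merged
block is pointed at the pointed element of `A`. -/
noncomputable def labPP {A : Finset ℕ} (π π' : PPart A) : ℕ × ℕ × Bool :=
  let olds := π.1 \ π'.1
  let mins := olds.image (fun b => minB b.1)
  (mins.min.untopD 0, mins.max.unbotD 0,
    if ∃ b ∈ olds, minB b.1 = mins.min.untopD 0 ∧ ∃ d ∈ π'.1 \ π.1, d.2 = b.2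
      then true else false)

/-- The minimum of the pointed partition poset: all blocks are pointed singletons. -/
def botPP (A : Finset ℕ) : PPart A :=
  ⟨A.image fun i => ({i}, i), by
    refine ⟨?_, ?_, ?_⟩
    · intro b hb
      obtain ⟨i, -, rfl⟩ := Finset.mem_image.1 hb
      exact Finset.mem_singleton_self i
    · intro b hb b' hb' hne
      obtain ⟨i, -, rfl⟩ := Finset.mem_image.1 hb
      obtain ⟨j, -, rfl⟩ := Finset.mem_image.1 hb'
      have hij : i ≠ j := fun h => hne (by rw [h])
      simp [Finset.disjoint_left, hij]
    · ext x
      simp⟩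

/-- The rank function of the pointed partition poset. -/
def rkPP {A : Finset ℕ} (π : PPart A) : ℕ := A.card - π.1.card

/-- Weighted partitions of the ground set `A`: partitions of `A` into blocks, each block `B`
carrying a weight `v` with `0 ≤ v ≤ |B| - 1`. -/
abbrev WPart (A : Finset ℕ) : Type :=
  {π : Finset (Finset ℕ × ℕ) //
    (∀ b ∈ π, b.2 < b.1.card) ∧
    (∀ b ∈ π, ∀ b' ∈ π, b ≠ b' → Disjoint b.1 b'.1) ∧
    π.biUnion Prod.fst = A}

/-- The cover relation of the weighted partition poset: merge blocks `A^v, B^w` into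
`(A ∪ B)^(v+w+u)` for some `u ∈ {0,1}`. -/
def covWP {A : Finset ℕ} (π π' : WPart A) : Prop :=
  ∃ b1 ∈ π.1, ∃ b2 ∈ π.1, minB b1.1 < minB b2.1 ∧ ∃ u : Bool,
    π'.1 = insert (b1.1 ∪ b2.1, b1.2 + b2.2 + (if u then 1 else 0)) ((π.1.erase b1).erase b2)

/-- The labeling `λ_w` (as a bare label map): the cover merging `A^v, B^w` with
`min A < min B` into `(A ∪ B)^(v+w+u)` gets the label `(min A, min B, u)`. -/
noncomputable def labWP {A : Finset ℕ} (π π' : WPart A) : ℕ × ℕ × Bool :=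
  let olds := π.1 \ π'.1
  let mins := olds.image (fun b => minB b.1)
  (mins.min.untopD 0, mins.max.unbotD 0,
    if (π'.1 \ π.1).sum Prod.snd = olds.sum Prod.snd + 1 then true else false)

/-- The minimum of the weighted partition poset: all blocks singletons of weight `0`. -/
def botWP (A : Finset ℕ) : WPart A :=
  ⟨A.image fun i => ({i}, 0), by
    refine ⟨?_, ?_, ?_⟩
    · intro b hb
      obtain ⟨i, -, rfl⟩ := Finset.mem_image.1 hb
      simp
    · intro b hb b' hb' hne
      obtain ⟨i, -, rfl⟩ := Finset.mem_image.1 hb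
      obtain ⟨j, -, rfl⟩ := Finset.mem_image.1 hb'
      have hij : i ≠ j := fun h => hne (by rw [h])
      simp [Finset.disjoint_left, hij]
    · ext x
      simp⟩

/-- The rank function of the weighted partition poset. -/
def rkWP {A : Finset ℕ} (π : WPart A) : ℕ := A.card - π.1.card
/-! ## Bicolored binary trees and Lyndon forests -/

/-- Planar binary trees with `ℕ`-labeled leaves and `Bool`-colored internal vertices
(`false` = color 0, `true` = color 1). -/
inductive BT : Type
  | leaf : ℕ → BT
  | node : Bool → BT → BT → BT
deriving DecidableEq

namespace BT

/-- The valency: the minimum leaf label of a tree. -/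
def nu : BT → ℕ
  | leaf a => a
  | node _ l r => min l.nu r.nu

/-- The set of leaf labels of a tree. -/
def leaves : BT → Finset ℕ
  | leaf a => {a}
  | node _ l r => l.leaves ∪ r.leaves

/-- The number of internal vertices of a tree. -/
def internals : BT → ℕ
  | leaf _ => 0
  | node _ l r => l.internals + r.internals + 1

/-- A tree is normalized if its leaf labels are distinct and every internal vertex has the
same valency as its left child. -/
def normalized : BT → Prop
  | leaf _ => True
  | node _ l r => l.normalized ∧ r.normalized ∧ Disjoint l.leaves r.leaves ∧ l.nu < r.nu

/-- The pointed Lyndon condition: at every internal vertex `v` with internal left child,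
`color (L v) ≥ color v`, and if `color (L v) = color v = 1` then `v` is a Lyndon vertex,
i.e. `ν (R (L v)) > ν (R v)`. -/
def pLyn : BT → Prop
  | leaf _ => True
  | node c l r => l.pLyn ∧ r.pLyn ∧
      (match l with
       | leaf _ => True
       | node c' _ r' => c ≤ c' ∧ ((c' = c ∧ c = true) → r.nu < r'.nu))

/-- The bicolored Lyndon condition: every internal vertex with internal left child is
Lyndon (`ν (R (L v)) > ν (R v)`) or satisfies `color (L v) > color v`. -/
def wLyn : BT → Prop
  | leaf _ => True
  | node c l r => l.wLyn ∧ r.wLyn ∧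
      (match l with
       | leaf _ => True
       | node c' _ r' => r.nu < r'.nu ∨ c < c')

/-- The pointed element of a bicolored tree: a `1`-colored vertex keeps the point of its
left subtree and a `0`-colored vertex keeps the point of its right subtree. -/
def ppt : BT → ℕ
  | leaf a => a
  | node c l r => if c then l.ppt else r.ppt

end BT

/-- `u`-merging of two pointed Lyndon trees: create a new root of color `u` with the two
trees as subtrees, then repeatedly slide the new vertex together with its right subtree
past its left child until the pointed Lyndon condition holds at the new vertex. -/
def mergeP (u : Bool) : BT → BT → BT
  | BT.leaf a, t2 => BT.node u (BT.leaf a) t2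
  | BT.node c a b, t2 =>
      if u ≤ c ∧ ((c = true ∧ u = true) → t2.nu < b.nu)
      then BT.node u (BT.node c a b) t2
      else BT.node c (mergeP u a t2) b

/-- `u`-merging of two bicolored Lyndon trees: create a new root of color `u` with the two
trees as subtrees, then repeatedly slide the new vertex together with its right subtree
past its left child until the bicolored Lyndon condition holds at the new vertex. -/
def mergeW (u : Bool) : BT → BT → BT
  | BT.leaf a, t2 => BT.node u (BT.leaf a) t2
  | BT.node c a b, t2 =>
      if t2.nu < b.nu ∨ u < c
      then BT.node u (BT.node c a b) t2
      else BT.node c (mergeW u a t2) b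

/-- A valid forest on the ground set `[n]`, each tree normalized and satisfying `P`, the
trees having pairwise disjoint leaf sets which together cover `[n] = {1, …, n}`. -/
def ForestValid (n : ℕ) (P : BT → Prop) (F : Finset BT) : Prop :=
  (∀ t ∈ F, t.normalized ∧ P t) ∧
  (∀ t ∈ F, ∀ t' ∈ F, t ≠ t' → Disjoint t.leaves t'.leaves) ∧
  F.biUnion BT.leaves = Finset.Icc 1 n

/-- The set of pointed Lyndon forests on `[n]`. -/
abbrev FLynP (n : ℕ) : Type := {F : Finset BT // ForestValid n BT.pLyn F}

/-- The set of bicolored Lyndon forests on `[n]`. -/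
abbrev FLynW (n : ℕ) : Type := {F : Finset BT // ForestValid n BT.wLyn F}

/-- The cover relation on forests: `u`-merge two of the trees (the one with smaller minimum
leaf label going to the left). -/
def covForest (merge : Bool → BT → BT → BT) (F F' : Finset BT) : Prop :=
  ∃ t1 ∈ F, ∃ t2 ∈ F, t1.nu < t2.nu ∧ ∃ u : Bool,
    F' = insert (merge u t1 t2) ((F.erase t1).erase t2)

/-- The cover relation of the poset of pointed Lyndon forests `FLyn_n^•`. -/
def covFP {n : ℕ} (F F' : FLynP n) : Prop := covForest mergeP F.1 F'.1

/-- The cover relation of the poset of bicolored Lyndon forests `FLyn_n^w`. -/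
def covFW {n : ℕ} (F F' : FLynW n) : Prop := covForest mergeW F.1 F'.1

/-- The forest of `n` isolated leaves. -/
def botForest (n : ℕ) : Finset BT := (Finset.Icc 1 n).image BT.leaf

theorem botForest_valid (n : ℕ) (P : BT → Prop) (hP : ∀ a, P (BT.leaf a)) :
    ForestValid n P (botForest n) := by
  refine ⟨?_, ?_, ?_⟩
  · intro t ht
    obtain ⟨i, -, rfl⟩ := Finset.mem_image.1 ht
    exact ⟨trivial, hP i⟩
  · intro t ht t' ht' hne
    obtain ⟨i, -, rfl⟩ := Finset.mem_image.1 ht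
    obtain ⟨j, -, rfl⟩ := Finset.mem_image.1 ht'
    have hij : i ≠ j := fun h => hne (by rw [h])
    simp only [BT.leaves]
    simp [Finset.disjoint_left, hij]
  · ext x
    simp [botForest, BT.leaves]

/-- The minimum of the poset of pointed Lyndon forests. -/
def botFP (n : ℕ) : FLynP n := ⟨botForest n, botForest_valid n _ fun _ => trivial⟩

/-- The minimum of the poset of bicolored Lyndon forests. -/
def botFW (n : ℕ) : FLynW n := ⟨botForest n, botForest_valid n _ fun _ => trivial⟩

/-- The rank of a forest: its total number of internal vertices. -/
def rkForest (F : Finset BT) : ℕ := F.sum BT.internals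

/-- The rank function of `FLyn_n^•`. -/
def rkFP {n : ℕ} (F : FLynP n) : ℕ := rkForest F.1

/-- The rank function of `FLyn_n^w`. -/
def rkFW {n : ℕ} (F : FLynW n) : ℕ := rkForest F.1

/-! ## The Whitney dual construction `R_λ(P)` -/

section RPoset

variable {α : Type*} {L : Type*}

/-- Swap the leftmost ascent of a word of labels. -/
noncomputable def swapFirstAscent (lt : L → L → Prop) : List L → List L
  | a :: b :: rest => if lt a b then b :: a :: rest else a :: swapFirstAscent lt (b :: rest)
  | w => w

/-- Sort a word of labels by repeatedly swapping its leftmost ascent until it is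
ascent-free. -/
noncomputable def sortWord (lt : L → L → Prop) (w : List L) : List L :=
  (swapFirstAscent lt)^[w.length * w.length] w

/-- The underlying set of the Whitney dual `R_λ(P)`: pairs `(x, w)` where `w` is the label
word of an ascent-free saturated chain from `0̂` to `x`. -/
abbrev RPoset (cov : α → α → Prop) (lab : α → α → L) (lt : L → L → Prop) (bot : α) : Type _ :=
  {q : α × List L //
    ∃ c, IsSatChain cov bot q.1 c ∧ AscFree lt (wordOf lab c) ∧ wordOf lab c = q.2}

/-- The cover relation of `R_λ(P)`: `(x, w) ⋖ (y, u)` iff `x ⋖ y` and `u` is obtained by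
sorting the label of `x ⋖ y` into `w`. -/
def covR (cov : α → α → Prop) (lab : α → α → L) (lt : L → L → Prop) (bot : α)
    (p q : RPoset cov lab lt bot) : Prop :=
  cov p.1.1 q.1.1 ∧ q.1.2 = sortWord lt (p.1.2 ++ [lab p.1.1 q.1.1])

end RPoset

/-! ## Reiner's poset of rooted spanning forests -/

/-- A rooted spanning forest on `[n]`, encoded by its parent function: `f i` is the parent
of the vertex `i` (`f i = i` for roots), vertices outside `[n]` being fixed, and every
vertex reaching a root after finitely many steps (acyclicity). -/
def SFvalid (n : ℕ) (f : ℕ → ℕ) : Prop :=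
  (∀ i ∈ Finset.Icc 1 n, f i ∈ Finset.Icc 1 n) ∧
  (∀ i, i ∉ Finset.Icc 1 n → f i = i) ∧
  (∀ i, ∃ k, f^[k + 1] i = f^[k] i)

/-- Reiner's poset `SF_n` of rooted spanning forests of the complete graph on `[n]`. -/
abbrev SF (n : ℕ) : Type := {f : ℕ → ℕ // SFvalid n f}

/-- The cover relation of `SF_n`: add an edge between the roots of two trees, one of the
two roots becoming the root of the merged tree. -/
def covSF {n : ℕ} (f g : SF n) : Prop :=
  ∃ r1 ∈ Finset.Icc 1 n, ∃ r2 ∈ Finset.Icc 1 n, r1 ≠ r2 ∧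
    f.1 r1 = r1 ∧ f.1 r2 = r2 ∧
    (g.1 = Function.update f.1 r1 r2 ∨ g.1 = Function.update f.1 r2 r1)

/-- The rank of a rooted spanning forest: its number of edges. -/
def rkSF {n : ℕ} (f : SF n) : ℕ := ((Finset.Icc 1 n).filter fun i => f.1 i ≠ i).card
/-! ## Further constructions used in particular statements -/

/-- The map `Φ` on underlying finsets: a pointed block `(B, q)` of a pointed partition
above `α` is sent to the set of minima of the `α`-blocks contained in `B`, pointed at the
minimum of the `α`-block containing `q`. -/
noncomputable def PhiMap (af : Finset (Finset ℕ × ℕ)) (pf : Finset (Finset ℕ × ℕ)) :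
    Finset (Finset ℕ × ℕ) :=
  pf.image fun b =>
    ((af.filter fun c => c.1 ⊆ b.1).image fun c => minB c.1,
     ((af.filter fun c => b.2 ∈ c.1).image fun c => minB c.1).min.untopD 0)

/-- The expected word of labels of the unique increasing maximal chain of the interval
`[0̂, [n]^p]` of the pointed partition poset:
`(1,2)¹ ⋯ (1,n)¹` if `p = 1`, and `(1,p)⁰ (1,2)¹ ⋯ (1,p-1)¹ (1,p+1)¹ ⋯ (1,n)¹` otherwise. -/
def expectedWordP (n p : ℕ) : List (ℕ × ℕ × Bool) :=
  let base := (List.range (n - 1)).map fun i => ((1 : ℕ), i + 2, true)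
  if p = 1 then base else ((1 : ℕ), p, false) :: base.erase (1, p, true)

/-- Merge two words of labels, each with non-increasing first components, into a single
word with non-increasing first components. -/
def mergeByNu : List (ℕ × ℕ × Bool) → List (ℕ × ℕ × Bool) → List (ℕ × ℕ × Bool)
  | [], ys => ys
  | xs, [] => xs
  | x :: xs, y :: ys =>
      if y.1 ≤ x.1 then x :: mergeByNu xs (y :: ys) else y :: mergeByNu (x :: xs) ys
termination_by xs ys => xs.length + ys.length

/-- The word of labels of a tree read along the reverse-minimal linear extension of its
internal vertices: the internal vertex `v` contributes `(ν (L v), ν (R v), color v)`, the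
vertices being listed with non-increasing valencies (descendants first among equal
valencies). -/
def BT.rmword : BT → List (ℕ × ℕ × Bool)
  | BT.leaf _ => []
  | BT.node c l r => mergeByNu l.rmword r.rmword ++ [(l.nu, r.nu, c)]

/-- The word of labels of the saturated chain `c(F)` associated to a forest `F`, read along
the reverse-minimal linear extension of the internal vertices of `F`. -/
noncomputable def forestWord (F : Finset BT) : List (ℕ × ℕ × Bool) :=
  (F.toList.map BT.rmword).foldr mergeByNu []

/-- `TLyn_{n,p}^•`: pointed Lyndon trees on `[n]` whose associated chain ends at `[n]^p`,
i.e. whose tracked pointed element is `p`. -/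
abbrev TLynBullet (n p : ℕ) : Type :=
  {T : BT // T.normalized ∧ T.pLyn ∧ T.leaves = Finset.Icc 1 n ∧ T.ppt = p}

/-- The labeling `λ̃` of `Πₙ•` proposed by Bellier-Millès, Delcroix-Oger and Hoffbeck:
the cover `u`-merging blocks with minima `a < b` in a pointed partition `π` with `|π|`
blocks is labeled `(b, a + n - |π|)` if `u = 0` and `(b, b + n - |π|)` if `u = 1`. -/
noncomputable def labT (n : ℕ) {A : Finset ℕ} (π π' : PPart A) : ℕ × ℕ :=
  let olds := π.1 \ π'.1
  let mins := olds.image fun b => minB b.1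
  let a := mins.min.untopD 0
  let b := mins.max.unbotD 0
  if ∃ c ∈ olds, minB c.1 = a ∧ ∃ d ∈ π'.1 \ π.1, d.2 = c.2
  then (b, b + n - π.1.card)
  else (b, a + n - π.1.card)

/-- The (strict) lexicographic order on `ℕ × ℕ`. -/
def ltT (x y : ℕ × ℕ) : Prop := x.1 < y.1 ∨ (x.1 = y.1 ∧ x.2 < y.2)


/-! ### Auxiliary lemmas for Statement 15 -/

section Aux15

/-- Generic rank monotonicity along `leOf`. -/
theorem leOf_rank_mono {α : Type*} {cov : α → α → Prop} {rk : α → ℕ}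
    (hstep : ∀ a b, cov a b → rk b = rk a + 1) {x y : α} (h : leOf cov x y) :
    x = y ∨ rk x < rk y := by
  induction h with
  | refl => exact Or.inl rfl
  | @tail b c h' hcov ih =>
    have hbc := hstep b c hcov
    rcases ih with rfl | hlt
    · exact Or.inr (by omega)
    · exact Or.inr (by omega)

namespace BT

theorem leaves_nonempty (t : BT) : t.leaves.Nonempty := by
  induction t with
  | leaf a => exact ⟨a, by simp [leaves]⟩
  | node c l r ihl ihr =>
    obtain ⟨x, hx⟩ := ihl
    exact ⟨x, by simp [leaves, hx]⟩

theorem leaves_mergeP (u : Bool) (t1 t2 : BT) :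
    (mergeP u t1 t2).leaves = t1.leaves ∪ t2.leaves := by
  induction t1 generalizing u with
  | leaf a => simp [mergeP, leaves]
  | node c a b iha ihb =>
    by_cases h : u ≤ c ∧ ((c = true ∧ u = true) → t2.nu < b.nu)
    · rw [mergeP, if_pos h]; rfl
    · rw [mergeP, if_neg h]
      simp only [leaves, iha]
      ext x
      simp only [BT.leaves, Finset.mem_union]
      tauto


theorem internals_mergeP (u : Bool) (t1 t2 : BT) :
    (mergeP u t1 t2).internals = t1.internals + t2.internals + 1 := by
  induction t1 generalizing u with
  | leaf a => simp [mergeP, internals]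
  | node c a b iha ihb =>
    by_cases h : u ≤ c ∧ ((c = true ∧ u = true) → t2.nu < b.nu)
    · rw [mergeP, if_pos h]; simp [internals]
    · rw [mergeP, if_neg h]
      simp only [internals, iha]
      omega

end BT

/-- The cover relation of `FLynₙ•` raises the rank by exactly one. -/
theorem covFP_rank_step {n : ℕ} (F F' : FLynP n) (h : covFP F F') :
    rkFP F' = rkFP F + 1 := by
  obtain ⟨t1, ht1, t2, ht2, hnu, u, hF'⟩ := h
  have ht12 : t1 ≠ t2 := fun h => by subst h; exact lt_irrefl _ hnu
  set m := mergeP u t1 t2 with hm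
  set S := (F.1.erase t1).erase t2 with hS
  have hmS : m ∉ S := by
    intro hmem
    have hmF : m ∈ F.1 := Finset.mem_of_mem_erase (Finset.mem_of_mem_erase hmem)
    have hmne : m ≠ t1 := Finset.ne_of_mem_erase (Finset.mem_of_mem_erase hmem)
    have hdis := F.2.2.1 m hmF t1 ht1 hmne
    obtain ⟨x, hx⟩ := BT.leaves_nonempty t1
    have hxm : x ∈ m.leaves := by
      rw [hm, BT.leaves_mergeP]; exact Finset.mem_union_left _ hx
    exact (Finset.disjoint_left.1 hdis hxm) hx
  have ht2' : t2 ∈ F.1.erase t1 := Finset.mem_erase.2 ⟨fun h => ht12 h.symm, ht2⟩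
  have h1 : ∑ t ∈ S, BT.internals t + BT.internals t2 = ∑ t ∈ F.1.erase t1, BT.internals t :=
    Finset.sum_erase_add _ _ ht2'
  have h2 : ∑ t ∈ F.1.erase t1, BT.internals t + BT.internals t1 = ∑ t ∈ F.1, BT.internals t :=
    Finset.sum_erase_add _ _ ht1
  have h3 : rkFP F' = BT.internals m + ∑ t ∈ S, BT.internals t := by
    rw [rkFP, rkForest, hF', Finset.sum_insert hmS]
  have h4 : rkFP F = ∑ t ∈ F.1, BT.internals t := rfl
  rw [h3, hm, BT.internals_mergeP]
  omega

end Aux15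

/-! ### SF side -/

/-- The minimum of `SF n`: the forest with no edges. -/
def botSF (n : ℕ) : SF n :=
  ⟨fun i => i, fun _ hi => hi, fun _ _ => rfl, fun i => ⟨0, by simp⟩⟩

theorem covSF_rank_step {n : ℕ} (f g : SF n) (h : covSF f g) : rkSF g = rkSF f + 1 := by
  have key : ∀ s t : ℕ, s ∈ Finset.Icc 1 n → s ≠ t → f.1 s = s →
      g.1 = Function.update f.1 s t → rkSF g = rkSF f + 1 := by
    intro s t hs hst hfs hg
    have hfilter : (Finset.Icc 1 n).filter (fun i => g.1 i ≠ i)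
        = insert s ((Finset.Icc 1 n).filter fun i => f.1 i ≠ i) := by
      ext i
      simp only [Finset.mem_filter, Finset.mem_insert, hg]
      by_cases his : i = s
      · subst his
        simp only [Function.update_self]
        simp [hs]
        exact fun h => hst h.symm
      · rw [Function.update_of_ne his]
        simp [his]
    have hsnot : s ∉ (Finset.Icc 1 n).filter fun i => f.1 i ≠ i := by
      simp [hfs]
    rw [rkSF, rkSF, hfilter, Finset.card_insert_of_notMem hsnot]
  obtain ⟨p, hp, q, hq, hpq, hfp, hfq, hor⟩ := h
  rcases hor with hg | hg
  · exact key p q hp hpq hfp hg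
  · exact key q p hq (Ne.symm hpq) hfq hg

theorem eq_botSF_of_rk {n : ℕ} (f : SF n) (h : rkSF f = 0) : f = botSF n := by
  apply Subtype.ext; funext i
  by_cases hi : i ∈ Finset.Icc 1 n
  · by_contra hne
    have : i ∈ (Finset.Icc 1 n).filter fun i => f.1 i ≠ i := Finset.mem_filter.2 ⟨hi, hne⟩
    rw [rkSF, Finset.card_eq_zero] at h
    simp [h] at this
  · exact f.2.2.1 i hi

theorem update_acyclic (f : ℕ → ℕ) (r : ℕ) :
    ∀ k j, f^[k+1] j = f^[k] j →
      ∃ m, (Function.update f r r)^[m+1] j = (Function.update f r r)^[m] j := by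
  intro k
  induction k with
  | zero =>
    intro j h
    by_cases hj : j = r
    · subst hj
      exact ⟨0, by simp [Function.update_self]⟩
    · refine ⟨0, ?_⟩
      show Function.update f r r j = (Function.update f r r)^[0] j
      rw [Function.update_of_ne hj]
      exact h
  | succ k ih =>
    intro j h
    by_cases hj : j = r
    · subst hj
      exact ⟨0, by simp [Function.update_self]⟩
    · have h' : f^[k+1] (f j) = f^[k] (f j) := by
        rw [← Function.iterate_succ_apply, ← Function.iterate_succ_apply]
        exact h
      obtain ⟨m, hm⟩ := ih (f j) h'
      refine ⟨m + 1, ?_⟩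
      have hgj : Function.update f r r j = f j := Function.update_of_ne hj _ _
      rw [Function.iterate_succ_apply (Function.update f r r) (m+1) j,
        Function.iterate_succ_apply (Function.update f r r) m j, hgj]
      exact hm

theorem botSF_min {n : ℕ} (f : SF n) : leOf covSF (botSF n) f := by
  suffices H : ∀ (k : ℕ) (f : SF n), rkSF f = k → leOf covSF (botSF n) f from H _ f rfl
  intro k
  induction k with
  | zero =>
    intro f hf
    rw [eq_botSF_of_rk f hf]
    exact Relation.ReflTransGen.refl
  | succ k ih =>
    intro f hf
    -- find a vertex with `f i ≠ i`
    have hpos : 0 < ((Finset.Icc 1 n).filter fun i => f.1 i ≠ i).card := by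
      rw [← rkSF, hf]; omega
    obtain ⟨i, hi⟩ := Finset.card_pos.1 hpos
    have hifi : f.1 i ≠ i := (Finset.mem_filter.1 hi).2
    have hex : ∃ k, f.1^[k+1] i = f.1^[k] i := f.2.2.2 i
    have hK0 : Nat.find hex ≠ 0 := by
      intro h0
      have := Nat.find_spec hex
      rw [h0] at this
      simpa using hifi this
    obtain ⟨K', hK'⟩ : ∃ K', Nat.find hex = K' + 1 := ⟨Nat.find hex - 1, by omega⟩
    set r1 := f.1^[K'] i with hr1
    set r2 := f.1 r1 with hr2
    have hr2' : f.1^[K'+1] i = r2 := by rw [Function.iterate_succ_apply', ← hr1, ← hr2]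
    have hfr2 : f.1 r2 = r2 := by
      have := Nat.find_spec hex
      rw [hK'] at this
      rw [Function.iterate_succ_apply', hr2'] at this
      rw [hr2] at this ⊢
      exact this
    have hr1r2 : r1 ≠ r2 := by
      intro h
      have : f.1^[K'+1] i = f.1^[K'] i := by rw [hr2', ← h]
      exact Nat.find_min hex (by omega : K' < Nat.find hex) this
    have hr1Icc : r1 ∈ Finset.Icc 1 n := by
      by_contra hout
      exact hr1r2 (f.2.2.1 r1 hout).symm
    have hr2Icc : r2 ∈ Finset.Icc 1 n := by
      rw [hr2]; exact f.2.1 r1 hr1Icc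
    have hvalid : SFvalid n (Function.update f.1 r1 r1) := by
      refine ⟨?_, ?_, ?_⟩
      · intro j hj
        by_cases hjr : j = r1
        · subst hjr; rw [Function.update_self]; exact hr1Icc
        · rw [Function.update_of_ne hjr]; exact f.2.1 j hj
      · intro j hj
        have hjr : j ≠ r1 := fun h => hj (h ▸ hr1Icc)
        rw [Function.update_of_ne hjr]
        exact f.2.2.1 j hj
      · intro j
        obtain ⟨k0, hk0⟩ := f.2.2.2 j
        exact update_acyclic f.1 r1 k0 j hk0
    have hcov : covSF ⟨Function.update f.1 r1 r1, hvalid⟩ f := by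
      refine ⟨r1, hr1Icc, r2, hr2Icc, hr1r2, ?_, ?_, Or.inl ?_⟩
      · show Function.update f.1 r1 r1 r1 = r1
        exact Function.update_self _ _ _
      · show Function.update f.1 r1 r1 r2 = r2
        rw [Function.update_of_ne (Ne.symm hr1r2)]
        exact hfr2
      · show f.1 = Function.update (Function.update f.1 r1 r1) r1 r2
        funext j
        by_cases hjr : j = r1
        · subst hjr
          rw [Function.update_self]
        · rw [Function.update_of_ne hjr, Function.update_of_ne hjr]
    have hrk : rkSF (⟨Function.update f.1 r1 r1, hvalid⟩ : SF n) = k := by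
      have := covSF_rank_step _ f hcov
      omega
    exact (ih _ hrk).tail hcov

theorem rkSF_bot (n : ℕ) : rkSF (botSF n) = 0 := by
  simp [rkSF, botSF]

/-- In `SF n` (`n ≥ 3`), above every atom `y` there is an element `x` such that `y` is the
unique element strictly between the minimum and `x`. -/
theorem sf_unique_between {n : ℕ} (hn : 3 ≤ n) (y : SF n)
    (hy : ltOf covSF (botSF n) y)
    (hatom : ∀ w, ¬(ltOf covSF (botSF n) w ∧ ltOf covSF w y)) :
    ∃ x : SF n, ltOf covSF y x ∧
      ∀ z : SF n, ltOf covSF (botSF n) z → ltOf covSF z x → z = y := by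
  have hstep : ∀ a b : SF n, covSF a b → rkSF b = rkSF a + 1 := fun a b => covSF_rank_step a b
  -- `y` covers the minimum
  have hcov : covSF (botSF n) y := by
    rcases Relation.ReflTransGen.cases_head hy.1 with heq | ⟨w, hw, hwy⟩
    · exact absurd heq hy.2
    · by_cases hwy' : w = y
      · subst hwy'; exact hw
      · exfalso
        refine hatom w ⟨⟨Relation.ReflTransGen.single hw, ?_⟩, hwy, hwy'⟩
        intro h
        rw [← h] at hw
        have := covSF_rank_step _ _ hw
        omega
  have hform : ∃ a b : ℕ, a ∈ Finset.Icc 1 n ∧ b ∈ Finset.Icc 1 n ∧ a ≠ b ∧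
      y.1 = Function.update (fun i => i) a b := by
    obtain ⟨a, ha, b, hb, hab, _, _, hor⟩ := hcov
    rcases hor with h | h
    · exact ⟨a, b, ha, hb, hab, h⟩
    · exact ⟨b, a, hb, ha, Ne.symm hab, h⟩
  obtain ⟨a, b, ha, hb, hab, hy1⟩ := hform
  have hya : y.1 a = b := by rw [hy1, Function.update_self]
  have hyb : y.1 b = b := by rw [hy1, Function.update_of_ne (Ne.symm hab)]
  have hyother : ∀ j, j ≠ a → y.1 j = j := by
    intro j hj; rw [hy1, Function.update_of_ne hj]
  -- pick a third vertex `c`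
  have hnsub : ¬ (Finset.Icc 1 n ⊆ ({a, b} : Finset ℕ)) := by
    intro hsub
    have h1 := Finset.card_le_card hsub
    have h2 : ({a, b} : Finset ℕ).card ≤ 2 :=
      le_trans (Finset.card_insert_le _ _) (by simp)
    rw [Nat.card_Icc] at h1
    omega
  obtain ⟨c, hcI, hc⟩ := Finset.not_subset.1 hnsub
  have hca : c ≠ a := by simp at hc; exact hc.1
  have hcb : c ≠ b := by simp at hc; exact hc.2
  set x1 := Function.update y.1 b c with hx1
  have hx1a : x1 a = b := by rw [hx1, Function.update_of_ne hab]; exact hya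
  have hx1b : x1 b = c := by rw [hx1, Function.update_self]
  have hx1other : ∀ j, j ≠ a → j ≠ b → x1 j = j := by
    intro j hj hj'
    rw [hx1, Function.update_of_ne hj']; exact hyother j hj
  have hx1c : x1 c = c := hx1other c hca hcb
  have hxvalid : SFvalid n x1 := by
    refine ⟨?_, ?_, ?_⟩
    · intro j hj
      by_cases hjb : j = b
      · subst hjb; rw [hx1b]; exact hcI
      · by_cases hja : j = a
        · subst hja; rw [hx1a]; exact hb
        · rw [hx1other j hja hjb]; exact hj
    · intro j hj
      exact hx1other j (fun h => hj (h ▸ ha)) (fun h => hj (h ▸ hb))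
    · intro j
      refine ⟨2, ?_⟩
      show x1 (x1 (x1 j)) = x1 (x1 j)
      by_cases hja : j = a
      · subst hja; rw [hx1a, hx1b, hx1c]
      · by_cases hjb : j = b
        · subst hjb; rw [hx1b, hx1c]; exact hx1c
        · simp [hx1other j hja hjb]
  set x : SF n := ⟨x1, hxvalid⟩ with hxdef
  have hcovyx : covSF y x := by
    refine ⟨b, hb, c, hcI, fun h => hcb h.symm, hyb, hyother c hca, Or.inl rfl⟩
  have hyx : ltOf covSF y x := by
    refine ⟨Relation.ReflTransGen.single hcovyx, ?_⟩
    intro h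
    have : y.1 b = x1 b := by rw [h]
    rw [hyb, hx1b] at this
    exact hcb this.symm
  refine ⟨x, hyx, ?_⟩
  -- rank facts
  have hrky : rkSF y = 1 := by
    have := covSF_rank_step _ _ hcov
    rw [rkSF_bot] at this
    omega
  have hrkx : rkSF x = 2 := by
    have := covSF_rank_step _ _ hcovyx
    omega
  intro z hbz hzx
  have hrkz : 1 ≤ rkSF z := by
    rcases leOf_rank_mono hstep hbz.1 with heq | hlt
    · exact absurd heq hbz.2
    · rw [rkSF_bot] at hlt; omega
  -- z is covered by x
  have hcovzx : covSF z x := by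
    rcases Relation.ReflTransGen.cases_head hzx.1 with heq | ⟨w, hzw, hwx⟩
    · exact absurd heq hzx.2
    · rcases leOf_rank_mono hstep hwx with heq | hlt
      · subst heq; exact hzw
      · exfalso
        have := covSF_rank_step _ _ hzw
        omega
  obtain ⟨p, hp, q, hq, hpq, hzp, hzq, hor2⟩ := hcovzx
  have hupd : ∃ s t : ℕ, s ≠ t ∧ z.1 s = s ∧ z.1 t = t ∧ x.1 = Function.update z.1 s t := by
    rcases hor2 with h | h
    · exact ⟨p, q, hpq, hzp, hzq, h⟩
    · exact ⟨q, p, Ne.symm hpq, hzq, hzp, h⟩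
  obtain ⟨s, t, hst, hzs, hzt, hupd⟩ := hupd
  have hxs : x.1 s = t := by rw [hupd, Function.update_self]
  have hzoff : ∀ j, j ≠ s → z.1 j = x.1 j := by
    intro j hj; rw [hupd, Function.update_of_ne hj]
  have hsab : s = a ∨ s = b := by
    by_contra hcon
    push_neg at hcon
    have : x1 s = s := hx1other s hcon.1 hcon.2
    rw [show x.1 = x1 from rfl] at hxs
    rw [this] at hxs
    exact hst hxs
  rcases hsab with h | h
  · -- s = a : impossible
    exfalso
    have hxa : x.1 s = t := hxs
    rw [h] at hxa
    have ht : t = b := by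
      rw [show x.1 = x1 from rfl, hx1a] at hxa
      exact hxa.symm
    have hbs : b ≠ s := by rw [h]; exact Ne.symm hab
    have hzb : z.1 b = c := by rw [hzoff b hbs, show x.1 = x1 from rfl, hx1b]
    have hzbb : z.1 b = b := by rw [ht] at hzt; exact hzt
    rw [hzbb] at hzb
    exact hcb hzb.symm
  · -- s = b : z = y
    apply Subtype.ext
    funext j
    by_cases hjb : j = b
    · rw [hjb]
      have hzbb : z.1 b = b := by rw [← h]; exact hzs
      rw [hzbb, hyb]
    · have h1 : z.1 j = x.1 j := hzoff j (by rw [h]; exact hjb)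
      rw [h1, show x.1 = x1 from rfl, hx1, Function.update_of_ne hjb]

/-! ### FLyn side -/

/-- The forest with a single `u`-colored cherry on `a < b` and all other leaves isolated. -/
def FabSet (n : ℕ) (u : Bool) (a b : ℕ) : Finset BT :=
  insert (BT.node u (BT.leaf a) (BT.leaf b))
    (((botForest n).erase (BT.leaf a)).erase (BT.leaf b))

theorem mem_botForest {n : ℕ} {t : BT} :
    t ∈ botForest n ↔ ∃ j, j ∈ Finset.Icc 1 n ∧ t = BT.leaf j := by
  simp only [botForest, Finset.mem_image]
  constructor
  · rintro ⟨j, hj, rfl⟩; exact ⟨j, hj, rfl⟩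
  · rintro ⟨j, hj, rfl⟩; exact ⟨j, hj, rfl⟩

theorem node_not_mem_botForest {n : ℕ} {u : Bool} {l r : BT} :
    BT.node u l r ∉ botForest n := by
  rw [mem_botForest]
  rintro ⟨j, -, h⟩
  exact BT.noConfusion h

theorem mem_FabSet {n : ℕ} {u : Bool} {a b : ℕ} {t : BT} :
    t ∈ FabSet n u a b ↔
      t = BT.node u (BT.leaf a) (BT.leaf b) ∨
        ∃ j, j ∈ Finset.Icc 1 n ∧ j ≠ a ∧ j ≠ b ∧ t = BT.leaf j := by
  simp only [FabSet, Finset.mem_insert, Finset.mem_erase, mem_botForest]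
  constructor
  · rintro (rfl | ⟨hb, ha, j, hj, rfl⟩)
    · exact Or.inl rfl
    · refine Or.inr ⟨j, hj, ?_, ?_, rfl⟩
      · exact fun h => ha (by rw [h])
      · exact fun h => hb (by rw [h])
  · rintro (rfl | ⟨j, hj, hja, hjb, rfl⟩)
    · exact Or.inl rfl
    · refine Or.inr ⟨?_, ?_, j, hj, rfl⟩
      · simp [hjb]
      · simp [hja]

theorem FabSet_valid {n : ℕ} {u : Bool} {a b : ℕ} (ha : a ∈ Finset.Icc 1 n)
    (hb : b ∈ Finset.Icc 1 n) (hab : a < b) :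
    ForestValid n BT.pLyn (FabSet n u a b) := by
  refine ⟨?_, ?_, ?_⟩
  · intro t ht
    rcases mem_FabSet.1 ht with rfl | ⟨j, hj, hja, hjb, rfl⟩
    · refine ⟨⟨trivial, trivial, ?_, hab⟩, ⟨trivial, trivial, trivial⟩⟩
      show Disjoint ({a} : Finset ℕ) {b}
      simp [Finset.disjoint_singleton]
      omega
    · exact ⟨trivial, trivial⟩
  · intro t ht t' ht' hne
    rw [Finset.disjoint_left]
    intro x hx hx'
    rcases mem_FabSet.1 ht with rfl | ⟨j, hj, hja, hjb, rfl⟩ <;>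
      rcases mem_FabSet.1 ht' with rfl | ⟨j', hj', hja', hjb', rfl⟩
    · exact hne rfl
    · simp only [BT.leaves, Finset.mem_union, Finset.mem_singleton] at hx hx'
      subst hx'
      rcases hx with rfl | rfl
      · exact hja' rfl
      · exact hjb' rfl
    · simp only [BT.leaves, Finset.mem_union, Finset.mem_singleton] at hx hx'
      subst hx
      rcases hx' with rfl | rfl
      · exact hja rfl
      · exact hjb rfl
    · simp only [BT.leaves, Finset.mem_singleton] at hx hx'
      subst hx; subst hx'
      exact hne rfl
  · ext i
    simp only [Finset.mem_biUnion]
    constructor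
    · rintro ⟨t, ht, hit⟩
      rcases mem_FabSet.1 ht with rfl | ⟨j, hj, hja, hjb, rfl⟩
      · simp only [BT.leaves, Finset.mem_union, Finset.mem_singleton] at hit
        rcases hit with rfl | rfl
        · exact ha
        · exact hb
      · simp only [BT.leaves, Finset.mem_singleton] at hit
        subst hit; exact hj
    · intro hi
      by_cases hia : i = a
      · refine ⟨BT.node u (BT.leaf a) (BT.leaf b), mem_FabSet.2 (Or.inl rfl), ?_⟩
        subst hia
        simp [BT.leaves]
      · by_cases hib : i = b
        · refine ⟨BT.node u (BT.leaf a) (BT.leaf b), mem_FabSet.2 (Or.inl rfl), ?_⟩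
          subst hib
          simp [BT.leaves]
        · exact ⟨BT.leaf i, mem_FabSet.2 (Or.inr ⟨i, hi, hia, hib, rfl⟩), by simp [BT.leaves]⟩

theorem leaf_mem_botForest {n j : ℕ} (hj : j ∈ Finset.Icc 1 n) :
    BT.leaf j ∈ botForest n := mem_botForest.2 ⟨j, hj, rfl⟩

theorem covFP_bot_Fab {n : ℕ} {u : Bool} {a b : ℕ} (ha : a ∈ Finset.Icc 1 n)
    (hb : b ∈ Finset.Icc 1 n) (hab : a < b) (z : FLynP n) (hz : z.1 = FabSet n u a b) :
    covFP (botFP n) z := by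
  refine ⟨BT.leaf a, leaf_mem_botForest ha, BT.leaf b, leaf_mem_botForest hb, hab, u, ?_⟩
  rw [hz]; rfl

theorem rk_botFP {n : ℕ} : rkFP (botFP n) = 0 := by
  show (botForest n).sum BT.internals = 0
  apply Finset.sum_eq_zero
  intro t ht
  obtain ⟨j, -, rfl⟩ := mem_botForest.1 ht
  rfl

theorem rk_Fab {n : ℕ} {u : Bool} {a b : ℕ} (z : FLynP n) (hz : z.1 = FabSet n u a b) :
    rkFP z = 1 := by
  have hnotmem : BT.node u (BT.leaf a) (BT.leaf b) ∉
      ((botForest n).erase (BT.leaf a)).erase (BT.leaf b) := by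
    intro h
    exact node_not_mem_botForest (Finset.mem_of_mem_erase (Finset.mem_of_mem_erase h))
  rw [rkFP, rkForest, hz, FabSet, Finset.sum_insert hnotmem]
  have : ∑ t ∈ ((botForest n).erase (BT.leaf a)).erase (BT.leaf b), BT.internals t = 0 := by
    apply Finset.sum_eq_zero
    intro t ht
    obtain ⟨j, -, rfl⟩ := mem_botForest.1 (Finset.mem_of_mem_erase (Finset.mem_of_mem_erase ht))
    rfl
  rw [this]
  rfl

theorem erase_swap' {α : Type*} [DecidableEq α] (s : Finset α) (a b : α) :
    (s.erase a).erase b = (s.erase b).erase a := by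
  ext x
  simp only [Finset.mem_erase]
  tauto

theorem FabSet_erase {n : ℕ} (u : Bool) (a b : ℕ) :
    (FabSet n u a b).erase (BT.node u (BT.leaf a) (BT.leaf b))
      = ((botForest n).erase (BT.leaf a)).erase (BT.leaf b) :=
  Finset.erase_insert fun h =>
    node_not_mem_botForest (Finset.mem_of_mem_erase (Finset.mem_of_mem_erase h))

theorem erase4_comm {α : Type*} [DecidableEq α] (s : Finset α) (a b c d : α) :
    (((s.erase a).erase b).erase c).erase d = (((s.erase c).erase d).erase a).erase b := by
  ext x
  simp only [Finset.mem_erase]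
  tauto

/-- Key structural fact: in `FLynₙ•`, every element strictly above the atom
`{node true 1 2}` has a second atom strictly below it. -/
theorem flyn_no_unique_between {n : ℕ} (hn : 3 ≤ n) (A : FLynP n)
    (hA : A.1 = FabSet n true 1 2) (x : FLynP n) (hAx : ltOf covFP A x) :
    ∃ z : FLynP n, z ≠ A ∧ ltOf covFP (botFP n) z ∧ ltOf covFP z x := by
  have hstep : ∀ F F' : FLynP n, covFP F F' → rkFP F' = rkFP F + 1 :=
    fun F F' => covFP_rank_step F F'
  have h1n : (1 : ℕ) ∈ Finset.Icc 1 n := by simp; omega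
  have h2n : (2 : ℕ) ∈ Finset.Icc 1 n := by simp [Finset.mem_Icc]; omega
  have hrkA : rkFP A = 1 := rk_Fab A hA
  rcases Relation.ReflTransGen.cases_head hAx.1 with heq | ⟨x1, hcov1, hle1⟩
  · exact absurd heq hAx.2
  have hrkx1 : rkFP x1 = 2 := by rw [covFP_rank_step A x1 hcov1, hrkA]
  have hrkx : 2 ≤ rkFP x := by
    rcases leOf_rank_mono hstep hle1 with rfl | hlt <;> omega
  have finish : ∀ z : FLynP n, z ≠ A → covFP (botFP n) z → covFP z x1 →
      ∃ z' : FLynP n, z' ≠ A ∧ ltOf covFP (botFP n) z' ∧ ltOf covFP z' x := by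
    intro z hzA hbz hzx1
    have hrkz : rkFP z = 1 := by
      have := covFP_rank_step _ _ hbz
      rw [rk_botFP] at this
      omega
    refine ⟨z, hzA, ⟨Relation.ReflTransGen.single hbz, ?_⟩,
      ⟨(Relation.ReflTransGen.single hzx1).trans hle1, ?_⟩⟩
    · intro h
      rw [← h] at hrkz
      rw [rk_botFP] at hrkz
      omega
    · intro h
      rw [h] at hrkz
      omega
  obtain ⟨t1, ht1, t2, ht2, hnu, u, hx1⟩ := hcov1
  rw [hA] at ht1 ht2 hx1
  rcases mem_FabSet.1 ht1 with rfl | ⟨c, hcI, hc1, hc2, rfl⟩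
  · -- `t1` is the cherry `12`
    rcases mem_FabSet.1 ht2 with rfl | ⟨r, hrI, hr1, hr2, rfl⟩
    · exact absurd hnu (lt_irrefl _)
    · have hr3 : 3 ≤ r := by
        simp only [Finset.mem_Icc] at hrI
        omega
      have h1r : (1 : ℕ) < r := by omega
      cases u with
      | false =>
        have hm : mergeP false (BT.node true (BT.leaf 1) (BT.leaf 2)) (BT.leaf r)
            = BT.node false (BT.node true (BT.leaf 1) (BT.leaf 2)) (BT.leaf r) := by
          simp only [mergeP]
          rw [if_pos]
          exact ⟨by decide, fun h => absurd h.2 (by decide)⟩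
        refine finish ⟨FabSet n false 1 r, FabSet_valid h1n hrI h1r⟩ ?_ ?_ ?_
        · intro h
          have hmem : BT.node false (BT.leaf 1) (BT.leaf r) ∈ FabSet n true 1 2 := by
            rw [← hA, ← congrArg Subtype.val h]
            exact mem_FabSet.2 (Or.inl rfl)
          rcases mem_FabSet.1 hmem with h' | ⟨j, -, -, -, h'⟩
          · simp at h'
          · exact BT.noConfusion h'
        · exact covFP_bot_Fab h1n hrI h1r _ rfl
        · refine ⟨BT.node false (BT.leaf 1) (BT.leaf r), mem_FabSet.2 (Or.inl rfl),
            BT.leaf 2, mem_FabSet.2 (Or.inr ⟨2, h2n, by omega, by omega, rfl⟩),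
            ?_, true, ?_⟩
          · show min (1 : ℕ) r < 2
            omega
          · have hm2 : mergeP true (BT.node false (BT.leaf 1) (BT.leaf r)) (BT.leaf 2)
                = BT.node false (BT.node true (BT.leaf 1) (BT.leaf 2)) (BT.leaf r) := by
              simp only [mergeP]
              rw [if_neg]
              intro h
              exact (by decide : ¬(true ≤ false)) h.1
            rw [hx1, hm, hm2]
            show insert _ (((FabSet n true 1 2).erase
                (BT.node true (BT.leaf 1) (BT.leaf 2))).erase (BT.leaf r)) = _
            rw [FabSet_erase, FabSet_erase,
              erase_swap' ((botForest n).erase (BT.leaf 1)) (BT.leaf 2) (BT.leaf r)]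
      | true =>
        have hm : mergeP true (BT.node true (BT.leaf 1) (BT.leaf 2)) (BT.leaf r)
            = BT.node true (BT.node true (BT.leaf 1) (BT.leaf r)) (BT.leaf 2) := by
          simp only [mergeP]
          rw [if_neg]
          intro h
          have := h.2 (by simp)
          simp only [BT.nu] at this
          omega
        refine finish ⟨FabSet n true 1 r, FabSet_valid h1n hrI h1r⟩ ?_ ?_ ?_
        · intro h
          have hmem : BT.node true (BT.leaf 1) (BT.leaf r) ∈ FabSet n true 1 2 := by
            rw [← hA, ← congrArg Subtype.val h]
            exact mem_FabSet.2 (Or.inl rfl)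
          rcases mem_FabSet.1 hmem with h' | ⟨j, -, -, -, h'⟩
          · simp only [BT.node.injEq, BT.leaf.injEq] at h'
            omega
          · exact BT.noConfusion h'
        · exact covFP_bot_Fab h1n hrI h1r _ rfl
        · refine ⟨BT.node true (BT.leaf 1) (BT.leaf r), mem_FabSet.2 (Or.inl rfl),
            BT.leaf 2, mem_FabSet.2 (Or.inr ⟨2, h2n, by omega, by omega, rfl⟩),
            ?_, true, ?_⟩
          · show min (1 : ℕ) r < 2
            omega
          · have hm2 : mergeP true (BT.node true (BT.leaf 1) (BT.leaf r)) (BT.leaf 2)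
                = BT.node true (BT.node true (BT.leaf 1) (BT.leaf r)) (BT.leaf 2) := by
              simp only [mergeP]
              rw [if_pos]
              refine ⟨le_refl _, fun _ => ?_⟩
              show (2 : ℕ) < r
              omega
            rw [hx1, hm, hm2]
            show insert _ (((FabSet n true 1 2).erase
                (BT.node true (BT.leaf 1) (BT.leaf 2))).erase (BT.leaf r)) = _
            rw [FabSet_erase, FabSet_erase,
              erase_swap' ((botForest n).erase (BT.leaf 1)) (BT.leaf 2) (BT.leaf r)]
  · -- `t1` is a leaf `c`
    rcases mem_FabSet.1 ht2 with rfl | ⟨d, hdI, hd1, hd2, rfl⟩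
    · -- impossible: `ν(leaf c) < ν(cherry 12) = 1`
      exfalso
      simp only [BT.nu, Finset.mem_Icc] at hnu hcI
      omega
    · have hcd : c < d := hnu
      have hc3 : 3 ≤ c := by
        simp only [Finset.mem_Icc] at hcI
        omega
      refine finish ⟨FabSet n u c d, FabSet_valid hcI hdI hcd⟩ ?_ ?_ ?_
      · intro h
        have hmem : BT.node u (BT.leaf c) (BT.leaf d) ∈ FabSet n true 1 2 := by
          rw [← hA, ← congrArg Subtype.val h]
          exact mem_FabSet.2 (Or.inl rfl)
        rcases mem_FabSet.1 hmem with h' | ⟨j, -, -, -, h'⟩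
        · simp only [BT.node.injEq, BT.leaf.injEq] at h'
          omega
        · exact BT.noConfusion h'
      · exact covFP_bot_Fab hcI hdI hcd _ rfl
      · refine ⟨BT.leaf 1, mem_FabSet.2 (Or.inr ⟨1, h1n, by omega, by omega, rfl⟩),
          BT.leaf 2, mem_FabSet.2 (Or.inr ⟨2, h2n, by omega, by omega, rfl⟩),
          ?_, true, ?_⟩
        · show (1 : ℕ) < 2
          omega
        · rw [hx1]
          show insert (BT.node u (BT.leaf c) (BT.leaf d))
              (((FabSet n true 1 2).erase (BT.leaf c)).erase (BT.leaf d))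
            = insert (BT.node true (BT.leaf 1) (BT.leaf 2))
              (((FabSet n u c d).erase (BT.leaf 1)).erase (BT.leaf 2))
          rw [show (FabSet n true 1 2).erase (BT.leaf c)
              = insert (BT.node true (BT.leaf 1) (BT.leaf 2))
                ((((botForest n).erase (BT.leaf 1)).erase (BT.leaf 2)).erase (BT.leaf c)) from
            Finset.erase_insert_of_ne (by simp),
            show ∀ s : Finset BT, (insert (BT.node true (BT.leaf 1) (BT.leaf 2)) s).erase (BT.leaf d)
              = insert (BT.node true (BT.leaf 1) (BT.leaf 2)) (s.erase (BT.leaf d)) from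
            fun s => Finset.erase_insert_of_ne (by simp)]
          rw [show (FabSet n u c d).erase (BT.leaf 1)
              = insert (BT.node u (BT.leaf c) (BT.leaf d))
                ((((botForest n).erase (BT.leaf c)).erase (BT.leaf d)).erase (BT.leaf 1)) from
            Finset.erase_insert_of_ne (by simp),
            show ∀ s : Finset BT, (insert (BT.node u (BT.leaf c) (BT.leaf d)) s).erase (BT.leaf 2)
              = insert (BT.node u (BT.leaf c) (BT.leaf d)) (s.erase (BT.leaf 2)) from
            fun s => Finset.erase_insert_of_ne (by simp)]
          rw [Finset.insert_comm]
          rw [erase4_comm (botForest n) (BT.leaf 1) (BT.leaf 2) (BT.leaf c) (BT.leaf d)]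

/-- For all `n ≥ 3`, the poset of pointed Lyndon forests `FLynₙ•` and
Reiner's poset of rooted spanning forests `SFₙ` are not isomorphic as posets. -/
theorem FLynP_not_iso_SF (n : ℕ) (hn : 3 ≤ n) :
    ¬ CovPosetIso (covFP (n := n)) (covSF (n := n)) := by
  rintro ⟨e, he⟩
  have h1n : (1 : ℕ) ∈ Finset.Icc 1 n := by simp [Finset.mem_Icc]; omega
  have h2n : (2 : ℕ) ∈ Finset.Icc 1 n := by simp [Finset.mem_Icc]; omega
  have hstepP : ∀ F F' : FLynP n, covFP F F' → rkFP F' = rkFP F + 1 :=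
    fun F F' => covFP_rank_step F F'
  -- the isomorphism sends the minimum to the minimum
  have hebot : e (botFP n) = botSF n := by
    have h2 : leOf covFP (e.symm (botSF n)) (botFP n) := by
      apply (he _ _).mpr
      rw [e.apply_symm_apply]
      exact botSF_min _
    rcases leOf_rank_mono hstepP h2 with heq | hlt
    · rw [← heq, e.apply_symm_apply]
    · exfalso
      rw [rk_botFP] at hlt
      omega
  -- the atom `A = {12-cherry of color 1}`
  have hA12 : (1 : ℕ) < 2 := one_lt_two
  set A : FLynP n := ⟨FabSet n true 1 2, FabSet_valid h1n h2n hA12⟩ with hAdef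
  have hrkA : rkFP A = 1 := rk_Fab A rfl
  have hbotA : ltOf covFP (botFP n) A := by
    refine ⟨Relation.ReflTransGen.single (covFP_bot_Fab h1n h2n hA12 A rfl), ?_⟩
    intro h
    have := rk_botFP (n := n)
    rw [h, hrkA] at this
    omega
  have hAatom : ∀ w, ¬(ltOf covFP (botFP n) w ∧ ltOf covFP w A) := by
    rintro w ⟨hw1, hw2⟩
    rcases leOf_rank_mono hstepP hw1.1 with heq | hlt1
    · exact hw1.2 heq
    rcases leOf_rank_mono hstepP hw2.1 with heq | hlt2
    · exact hw2.2 heq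
    rw [rk_botFP] at hlt1
    rw [hrkA] at hlt2
    omega
  -- transport to `SF n`
  have hy : ltOf covSF (botSF n) (e A) := by
    refine ⟨?_, ?_⟩
    · rw [← hebot]
      exact (he _ _).mp hbotA.1
    · intro h
      exact hbotA.2 (e.injective (hebot.trans h))
  have hyatom : ∀ w, ¬(ltOf covSF (botSF n) w ∧ ltOf covSF w (e A)) := by
    rintro w ⟨hw1, hw2⟩
    apply hAatom (e.symm w)
    refine ⟨⟨?_, ?_⟩, ⟨?_, ?_⟩⟩
    · apply (he _ _).mpr
      rw [e.apply_symm_apply, hebot]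
      exact hw1.1
    · intro h
      exact hw1.2 (by rw [← hebot, h, e.apply_symm_apply])
    · apply (he _ _).mpr
      rw [e.apply_symm_apply]
      exact hw2.1
    · intro h
      exact hw2.2 (by rw [← h, e.apply_symm_apply])
  obtain ⟨x, hyx, huniq⟩ := sf_unique_between hn (e A) hy hyatom
  have hAx : ltOf covFP A (e.symm x) := by
    refine ⟨?_, ?_⟩
    · apply (he _ _).mpr
      rw [e.apply_symm_apply]
      exact hyx.1
    · intro h
      exact hyx.2 (by rw [h, e.apply_symm_apply])
  obtain ⟨z, hzA, hbz, hzx⟩ := flyn_no_unique_between hn A rfl (e.symm x) hAx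
  have hz1 : ltOf covSF (botSF n) (e z) := by
    refine ⟨?_, fun h => hbz.2 (e.injective (hebot.trans h))⟩
    rw [← hebot]
    exact (he _ _).mp hbz.1
  have hz2 : ltOf covSF (e z) x := by
    refine ⟨?_, ?_⟩
    · have := (he _ _).mp hzx.1
      rwa [e.apply_symm_apply] at this
    · intro h
      exact hzx.2 (by rw [← h, e.symm_apply_apply])
  exact hzA (e.injective (huniq (e z) hz1 hz2))
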